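/- Under the hypotheses that γ is twice differentiable and nonvanishing with γ² = (x+iy)², the Laplacian satisfies Δγ = (n-1)/γ. -/

import Mathlib

/-- If `γ` is twice differentiable, nonvanishing, with `γ² = (x+iy)²`, then
`Δγ = (n-1)/γ`. -/
theorem stmt7 (n : ℕ) (y : Fin n → ℝ) (U : Set (Fin n → ℝ)) (hU : IsOpen U)
    (γ : (Fin n → ℝ) → ℂ) (hγ : ContDiffOn ℝ 2 γ U)
    (hsq : ∀ x ∈ U, γ x ^ 2 = ∑ k, ((x k : ℂ) + (y k : ℂ) * Complex.I) ^ 2)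
    (hne : ∀ x ∈ U, γ x ≠ 0) :
    ∀ x ∈ U,
      ∑ k, fderiv ℝ (fun x' => fderiv ℝ γ x' (Pi.single k 1)) x (Pi.single k 1)
        = ((n : ℂ) - 1) / γ x := by
  have hγd : ∀ x' ∈ U, DifferentiableAt ℝ γ x' := fun x' hx' =>
    ((hγ.differentiableOn two_ne_zero) x' hx').differentiableAt (hU.mem_nhds hx')
  have hDγ : ∀ x' ∈ U, DifferentiableAt ℝ (fderiv ℝ γ) x' := fun x' hx' =>
    (((hγ.fderiv_of_isOpen (m := 1) hU (by norm_num)).differentiableOn one_ne_zero) x' hx').differentiableAt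
      (hU.mem_nhds hx')
  have hg : ∀ (k : Fin n), ∀ x' ∈ U,
      DifferentiableAt ℝ (fun x'' => fderiv ℝ γ x'' (Pi.single k 1)) x' := by
    intro k x' hx'
    exact (ContinuousLinearMap.apply ℝ ℂ (Pi.single k 1)).differentiableAt.comp x' (hDγ x' hx')
  -- derivative of the coordinate functions
  have hz : ∀ (j : Fin n) (x' : Fin n → ℝ),
      HasFDerivAt (fun x'' : Fin n → ℝ => ((x'' j : ℂ) + (y j : ℂ) * Complex.I))
        (Complex.ofRealCLM.comp (ContinuousLinearMap.proj j)) x' := by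
    intro j x'
    exact (Complex.ofRealCLM.hasFDerivAt.comp x'
      ((ContinuousLinearMap.proj j : (Fin n → ℝ) →L[ℝ] ℝ).hasFDerivAt)).add_const _
  -- first derivative identity
  have hA : ∀ x' ∈ U, ∀ k, γ x' * fderiv ℝ γ x' (Pi.single k 1)
      = (x' k : ℂ) + (y k : ℂ) * Complex.I := by
    intro x' hx' k
    have h1 : HasFDerivAt (fun x'' => γ x'' * γ x'')
        (γ x' • fderiv ℝ γ x' + γ x' • fderiv ℝ γ x') x' :=
      (hγd x' hx').hasFDerivAt.mul (hγd x' hx').hasFDerivAt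
    have h2 : HasFDerivAt
        (fun x'' : Fin n → ℝ => ∑ j, ((x'' j : ℂ) + (y j : ℂ) * Complex.I) ^ 2)
        (∑ j, (((x' j : ℂ) + (y j : ℂ) * Complex.I) •
            (Complex.ofRealCLM.comp (ContinuousLinearMap.proj j)) +
          ((x' j : ℂ) + (y j : ℂ) * Complex.I) •
            (Complex.ofRealCLM.comp (ContinuousLinearMap.proj j)))) x' := by
      refine HasFDerivAt.fun_sum fun j _ => ?_
      simpa [pow_two] using (hz j x').fun_mul (hz j x')
    have heq : (fun x'' => γ x'' * γ x'') =ᶠ[nhds x']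
        (fun x'' : Fin n → ℝ => ∑ j, ((x'' j : ℂ) + (y j : ℂ) * Complex.I) ^ 2) := by
      filter_upwards [hU.mem_nhds hx'] with a ha
      simpa [pow_two] using hsq a ha
    have h1' := h1.congr_of_eventuallyEq heq.symm
    have huniq := h1'.unique h2
    have happ := congrArg (fun L : (Fin n → ℝ) →L[ℝ] ℂ => L (Pi.single k 1)) huniq
    simp only [ContinuousLinearMap.add_apply, ContinuousLinearMap.smul_apply,
      ContinuousLinearMap.sum_apply, ContinuousLinearMap.comp_apply,
      ContinuousLinearMap.proj_apply, smul_eq_mul, Complex.ofRealCLM_apply,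
      Pi.single_apply, apply_ite (Complex.ofReal), Complex.ofReal_one,
      Complex.ofReal_zero, mul_ite, mul_one, mul_zero, Finset.sum_add_distrib,
      Finset.sum_ite_eq, Finset.sum_ite_eq', Finset.mem_univ, if_true] at happ
    linear_combination happ / 2
  -- second derivative identity
  intro x hx
  have hB : ∀ k, γ x * fderiv ℝ (fun x' => fderiv ℝ γ x' (Pi.single k 1)) x (Pi.single k 1)
      + (fderiv ℝ γ x (Pi.single k 1)) * (fderiv ℝ γ x (Pi.single k 1)) = 1 := by
    intro k
    have hprod : HasFDerivAt
        (fun x' => γ x' * fderiv ℝ γ x' (Pi.single k 1))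
        (γ x • fderiv ℝ (fun x' => fderiv ℝ γ x' (Pi.single k 1)) x
          + fderiv ℝ γ x (Pi.single k 1) • fderiv ℝ γ x) x :=
      (hγd x hx).hasFDerivAt.mul (hg k x hx).hasFDerivAt
    have heq : (fun x' => γ x' * fderiv ℝ γ x' (Pi.single k 1)) =ᶠ[nhds x]
        (fun x' : Fin n → ℝ => ((x' k : ℂ) + (y k : ℂ) * Complex.I)) := by
      filter_upwards [hU.mem_nhds hx] with a ha
      exact hA a ha k
    have h2 := (hz k x).congr_of_eventuallyEq heq
    have huniq := hprod.unique h2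
    have happ := congrArg (fun L : (Fin n → ℝ) →L[ℝ] ℂ => L (Pi.single k 1)) huniq
    simpa [ContinuousLinearMap.add_apply, ContinuousLinearMap.smul_apply, smul_eq_mul,
      ContinuousLinearMap.comp_apply, ContinuousLinearMap.proj_apply,
      Pi.single_eq_same] using happ
  have hγx := hne x hx
  -- sum of squares of first derivatives is 1
  have hsum1 : ∑ k, (fderiv ℝ γ x (Pi.single k 1)) * (fderiv ℝ γ x (Pi.single k 1)) = 1 := by
    have h1 : ∑ k, (γ x * fderiv ℝ γ x (Pi.single k 1)) * (γ x * fderiv ℝ γ x (Pi.single k 1))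
        = γ x * γ x := by
      rw [Finset.sum_congr rfl (fun k _ => by rw [hA x hx k])]
      have := hsq x hx
      simp only [pow_two] at this
      rw [← this]
    have h3 : (γ x * γ x) * ∑ k, (fderiv ℝ γ x (Pi.single k 1)) * (fderiv ℝ γ x (Pi.single k 1))
        = ∑ k, (γ x * fderiv ℝ γ x (Pi.single k 1)) * (γ x * fderiv ℝ γ x (Pi.single k 1)) := by
      rw [Finset.mul_sum]
      exact Finset.sum_congr rfl fun k _ => by ring
    exact mul_left_cancel₀ (mul_ne_zero hγx hγx) (by rw [mul_one]; exact h3.trans h1)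
  -- combine
  have hsumB : γ x * ∑ k, fderiv ℝ (fun x' => fderiv ℝ γ x' (Pi.single k 1)) x (Pi.single k 1)
      = (n : ℂ) - 1 := by
    have := Finset.sum_congr rfl (fun k (_ : k ∈ Finset.univ) => hB k)
    rw [Finset.sum_add_distrib, hsum1, ← Finset.mul_sum] at this
    simp at this
    linear_combination this
  field_simp [hγx]
  linear_combination hsumB
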